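/- If a real multilinear polynomial G of degree at most t over {−1,1}^n agrees with the product function ∏_i x_i on at least a 3/4 fraction of inputs, then t ≥ c·√n for some absolute constant c > 0 (for n sufficiently large). -/

import Mathlib

/-- Map a Boolean to the corresponding element of `{-1, 1} ⊆ ℝ`. -/
noncomputable def chi (b : Bool) : ℝ := if b then 1 else -1

lemma chi_mul_self (b : Bool) : chi b * chi b = 1 := by cases b <;> simp [chi]

lemma chi_pow (b : Bool) (k : ℕ) : chi b ^ k = if Odd k then chi b else 1 := by
  rcases Nat.even_or_odd k with h | h
  · rw [if_neg (Nat.not_odd_iff_even.mpr h)]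
    cases b <;> simp [chi, h.neg_one_pow]
  · rw [if_pos h]
    cases b <;> simp [chi, h.neg_one_pow]

noncomputable def chiS {n : ℕ} (S : Finset (Fin n)) (x : Fin n → Bool) : ℝ :=
  ∏ i ∈ S, chi (x i)

lemma chiS_eq {n : ℕ} (S : Finset (Fin n)) (x : Fin n → Bool) :
    chiS S x = ∏ i : Fin n, if i ∈ S then chi (x i) else 1 := by
  rw [chiS, Finset.prod_ite_mem, Finset.univ_inter]

lemma chiS_mul {n : ℕ} (S T : Finset (Fin n)) (x : Fin n → Bool) :
    chiS S x * chiS T x = chiS (symmDiff S T) x := by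
  rw [chiS_eq, chiS_eq, chiS_eq, ← Finset.prod_mul_distrib]
  refine Finset.prod_congr rfl fun i _ => ?_
  by_cases hS : i ∈ S <;> by_cases hT : i ∈ T <;>
    simp [hS, hT, Finset.mem_symmDiff, chi_mul_self]

/-- odd-degree variable set of a monomial -/
def oddSet {n : ℕ} (d : Fin n →₀ ℕ) : Finset (Fin n) := d.support.filter fun i => Odd (d i)

lemma eval_eq_sum_chiS {n : ℕ} (G : MvPolynomial (Fin n) ℝ) (x : Fin n → Bool) :
    MvPolynomial.eval (fun i => chi (x i)) G
      = ∑ d ∈ G.support, G.coeff d * chiS (oddSet d) x := by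
  rw [MvPolynomial.eval_eq]
  refine Finset.sum_congr rfl fun d _ => ?_
  congr 1
  rw [oddSet, chiS, Finset.prod_filter]
  exact Finset.prod_congr rfl fun i _ => chi_pow _ _

lemma oddSet_card_le {n : ℕ} {G : MvPolynomial (Fin n) ℝ} {d : Fin n →₀ ℕ}
    (hd : d ∈ G.support) : (oddSet d).card ≤ G.totalDegree := by
  refine le_trans ?_ (MvPolynomial.le_totalDegree hd)
  calc (oddSet d).card ≤ d.support.card := Finset.card_filter_le _ _
    _ = ∑ i ∈ d.support, 1 := by simp
    _ ≤ ∑ i ∈ d.support, d i := Finset.sum_le_sum fun i hi =>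
        Nat.one_le_iff_ne_zero.mpr (Finsupp.mem_support_iff.mp hi)
    _ = d.sum fun _ e => e := rfl

lemma sum_chiS_mul {n : ℕ} (y x : Fin n → Bool) :
    ∑ S : Finset (Fin n), chiS S y * chiS S x = if y = x then (2:ℝ)^n else 0 := by
  have h1 : ∀ S : Finset (Fin n), chiS S y * chiS S x = ∏ i ∈ S, (chi (y i) * chi (x i)) := by
    intro S; rw [chiS, chiS, Finset.prod_mul_distrib]
  simp_rw [h1]
  have h2 := Finset.prod_add (fun i : Fin n => chi (y i) * chi (x i)) (fun _ => (1:ℝ))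
      Finset.univ
  simp only [Finset.prod_const_one, mul_one] at h2
  rw [← Finset.powerset_univ, ← h2]
  by_cases hyx : y = x
  · subst hyx
    rw [if_pos rfl]
    have : ∀ i : Fin n, chi (y i) * chi (y i) + 1 = 2 := fun i => by rw [chi_mul_self]; norm_num
    simp_rw [this]
    simp [Finset.prod_const]
  · rw [if_neg hyx]
    have : ∃ i, y i ≠ x i := by
      by_contra h
      push_neg at h
      exact hyx (funext h)
    obtain ⟨i, hi⟩ := this
    apply Finset.prod_eq_zero (Finset.mem_univ i)
    revert hi
    cases y i <;> cases x i <;> simp [chi]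

open Finset Submodule

lemma card_agree_le (n t : ℕ) (G : MvPolynomial (Fin n) ℝ) (hdeg : G.totalDegree ≤ t)
    (A : Finset (Fin n → Bool))
    (hA : ∀ x ∈ A, MvPolynomial.eval (fun i => chi (x i)) G = ∏ i, chi (x i)) :
    A.card ≤ ∑ k ∈ Finset.range (n / 2 + t + 1), n.choose k := by
  classical
  set D := n / 2 + t with hD
  set 𝒮 : Finset (Finset (Fin n)) := Finset.univ.filter (fun S => S.card ≤ D) with h𝒮
  set v : Finset (Fin n) → (↥A → ℝ) := fun S a => chiS S a.1 with hv
  -- Step 1: every v S is in the span of v '' 𝒮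
  have key : ∀ S : Finset (Fin n), v S ∈ span ℝ (v '' ↑𝒮) := by
    intro S
    by_cases hS : S.card ≤ D
    · exact subset_span ⟨S, by simp [h𝒮, hS], rfl⟩
    · push_neg at hS
      have hvS : v S = ∑ d ∈ G.support, G.coeff d • v (symmDiff (oddSet d) Sᶜ) := by
        funext a
        have hx : a.1 ∈ A := a.2
        have h1 : chiS Finset.univ a.1 * chiS Sᶜ a.1 = chiS S a.1 := by
          rw [chiS_mul]
          congr 1
          simp [symmDiff_eq_sup_sdiff_inf]
        have h2 : chiS Finset.univ a.1 = MvPolynomial.eval (fun i => chi (a.1 i)) G := by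
          rw [hA a.1 hx]; rfl
        have h3 := eval_eq_sum_chiS G a.1
        simp only [hv, Finset.sum_apply, Pi.smul_apply, smul_eq_mul]
        calc chiS S a.1 = (∑ d ∈ G.support, G.coeff d * chiS (oddSet d) a.1) * chiS Sᶜ a.1 := by
              rw [← h3, ← h2, h1]
          _ = ∑ d ∈ G.support, G.coeff d * (chiS (oddSet d) a.1 * chiS Sᶜ a.1) := by
              rw [Finset.sum_mul]; exact Finset.sum_congr rfl fun d _ => mul_assoc _ _ _
          _ = ∑ d ∈ G.support, G.coeff d * chiS (symmDiff (oddSet d) Sᶜ) a.1 := by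
              simp_rw [chiS_mul]
      rw [hvS]
      refine Submodule.sum_mem _ fun d hd => Submodule.smul_mem _ _ (subset_span ?_)
      refine ⟨symmDiff (oddSet d) Sᶜ, ?_, rfl⟩
      simp only [h𝒮, Finset.mem_coe, Finset.mem_filter, Finset.mem_univ, true_and]
      have hc1 : (oddSet d).card ≤ t := le_trans (oddSet_card_le hd) hdeg
      have hc2 : Sᶜ.card ≤ n / 2 := by
        rw [Finset.card_compl, Fintype.card_fin]
        omega
      calc (symmDiff (oddSet d) Sᶜ).card ≤ (oddSet d).card + Sᶜ.card := by
            rw [symmDiff_eq_sup_sdiff_inf]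
            refine le_trans (Finset.card_le_card ?_) (Finset.card_union_le _ _)
            exact Finset.sdiff_subset
        _ ≤ t + n / 2 := add_le_add hc1 hc2
        _ = D := by omega
  -- Step 2: the v S for all S span everything
  have htop : span ℝ (v '' ↑𝒮) = ⊤ := by
    rw [eq_top_iff]
    intro f _
    have hsingle : ∀ a : ↥A, (Pi.single a 1 : ↥A → ℝ) ∈ span ℝ (v '' ↑𝒮) := by
      intro a
      have hps : (Pi.single a 1 : ↥A → ℝ)
          = ((2:ℝ)^n)⁻¹ • ∑ S : Finset (Fin n), chiS S a.1 • v S := by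
        funext b
        simp only [Pi.smul_apply, Finset.sum_apply, smul_eq_mul, hv]
        have := sum_chiS_mul a.1 b.1
        rw [this]
        by_cases hab : a = b
        · subst hab
          rw [if_pos rfl, Pi.single_eq_same]
          field_simp
        · have : a.1 ≠ b.1 := fun h => hab (Subtype.ext h)
          rw [if_neg this]
          simp [Pi.single_eq_of_ne (Ne.symm hab)]
      rw [hps]
      exact Submodule.smul_mem _ _ (Submodule.sum_mem _ fun S _ =>
        Submodule.smul_mem _ _ (key S))
    have hf : f = ∑ a : ↥A, f a • (Pi.single a 1 : ↥A → ℝ) := by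
      funext b
      simp [Pi.single_apply]
    rw [hf]
    exact Submodule.sum_mem _ fun a _ => Submodule.smul_mem _ _ (hsingle a)
  -- Step 3: finrank counting
  have h1 : A.card = Module.finrank ℝ (↥A → ℝ) := by
    rw [Module.finrank_fintype_fun_eq_card, Fintype.card_coe]
  have h2 : span ℝ (Set.range fun S : ↥𝒮 => v S.1) = ⊤ := by
    rw [eq_top_iff, ← htop]
    refine span_le.mpr fun f hf => ?_
    obtain ⟨S, hS, rfl⟩ := hf
    exact subset_span ⟨⟨S, hS⟩, rfl⟩
  have h3 : Module.finrank ℝ (↥A → ℝ) ≤ Fintype.card ↥𝒮 :=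
    finrank_le_of_span_eq_top h2
  rw [Fintype.card_coe] at h3
  have h4 : 𝒮.card ≤ ∑ k ∈ Finset.range (D + 1), n.choose k := by
    have hsub : 𝒮 ⊆ (Finset.range (D + 1)).biUnion
        (fun k => Finset.powersetCard k Finset.univ) := by
      intro S hS
      simp only [h𝒮, Finset.mem_filter] at hS
      refine Finset.mem_biUnion.mpr ⟨S.card, Finset.mem_range.mpr (by omega), ?_⟩
      simp [Finset.mem_powersetCard]
    refine le_trans (Finset.card_le_card hsub) (le_trans (Finset.card_biUnion_le) ?_)
    refine Finset.sum_le_sum fun k _ => ?_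
    rw [Finset.card_powersetCard, Finset.card_univ, Fintype.card_fin]
  omega

lemma centralBinom_sq_le (m : ℕ) : (Nat.centralBinom m)^2 * (2*m+1) ≤ 16^m := by
  induction m with
  | zero => simp [Nat.centralBinom]
  | succ m ih =>
    have h := Nat.succ_mul_centralBinom_succ m
    have hpos : 0 < (m+1)^2 := by positivity
    have key : (m+1)^2 * ((Nat.centralBinom (m+1))^2 * (2*(m+1)+1)) ≤ (m+1)^2 * 16^(m+1) := by
      have e1 : (m+1)^2 * ((Nat.centralBinom (m+1))^2 * (2*(m+1)+1))
          = ((m+1) * Nat.centralBinom (m+1))^2 * (2*m+3) := by ring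
      rw [e1, h]
      have e2 : (2 * (2*m+1) * Nat.centralBinom m)^2 * (2*m+3)
          = (4 * (2*m+1) * (2*m+3)) * ((Nat.centralBinom m)^2 * (2*m+1)) := by ring
      rw [e2]
      calc (4 * (2*m+1) * (2*m+3)) * ((Nat.centralBinom m)^2 * (2*m+1))
          ≤ (4 * (2*m+1) * (2*m+3)) * 16^m := Nat.mul_le_mul_left _ ih
        _ ≤ ((m+1)^2 * 16) * 16^m := by
            have : 4 * (2*m+1) * (2*m+3) ≤ (m+1)^2 * 16 := by nlinarith
            exact Nat.mul_le_mul_right _ this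
        _ = (m+1)^2 * 16^(m+1) := by ring
    exact Nat.le_of_mul_le_mul_left key hpos

lemma mid_sq_le (n : ℕ) : (n.choose (n/2))^2 * n ≤ 4^n := by
  rcases Nat.even_or_odd n with ⟨m, hm⟩ | ⟨m, hm⟩
  · subst hm
    have h2 : (m+m)/2 = m := by omega
    rw [h2]
    have hc : (m+m).choose m = Nat.centralBinom m := by rw [Nat.centralBinom]; congr 1; ring
    rw [hc]
    have h16 : (16:ℕ)^m = 4^(m+m) := by
      have : (16:ℕ)^m = (4^2)^m := by norm_num
      rw [this, ← pow_mul]; congr 1; ring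
    calc (Nat.centralBinom m)^2 * (m+m) ≤ (Nat.centralBinom m)^2 * (2*m+1) :=
          Nat.mul_le_mul_left _ (by omega)
      _ ≤ 16^m := centralBinom_sq_le m
      _ = 4^(m+m) := h16
  · subst hm
    have h2 : (2*m+1)/2 = m := by omega
    rw [h2]
    have hid := Nat.add_one_mul_choose_eq (2*m+1) m
    -- hid : (2*m+1+1) * (2*m+1).choose m = (2*m+1+1).choose (m+1) * (m+1)
    set c := (2*m+1).choose m with hcdef
    have hcb : Nat.centralBinom (m+1) = 2 * c := by
      have e : Nat.centralBinom (m+1) = (2*m+1+1).choose (m+1) := by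
        rw [Nat.centralBinom]; congr 1
      have h3 : (2*m+1+1).choose (m+1) * (m+1) = (2 * c) * (m+1) := by
        rw [← hid]; ring
      rw [e]
      exact Nat.eq_of_mul_eq_mul_right (by omega) h3
    have hc := centralBinom_sq_le (m+1)
    rw [hcb] at hc
    have e4 : (2 * c)^2 * (2*(m+1)+1) = 4 * (c^2 * (2*m+3)) := by ring
    rw [e4] at hc
    have h16 : (16:ℕ)^(m+1) = 4 * 4^(2*m+1) := by
      have : (16:ℕ)^(m+1) = (4^2)^(m+1) := by norm_num
      rw [this, ← pow_mul, show 2*(m+1) = (2*m+1)+1 by ring, pow_succ]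
      ring
    rw [h16] at hc
    have h5 : c^2 * (2*m+3) ≤ 4^(2*m+1) := by omega
    calc c^2 * (2*m+1) ≤ c^2 * (2*m+3) := Nat.mul_le_mul_left _ (by omega)
      _ ≤ 4^(2*m+1) := h5

lemma two_mul_sum_half_le (n : ℕ) :
    2 * ∑ k ∈ range (n/2 + 1), n.choose k ≤ 2^n + n.choose (n/2) := by
  have hrefl : ∑ k ∈ range (n/2 + 1), n.choose k
      = ∑ k ∈ Finset.Ico (n - n/2) (n+1), n.choose k := by
    refine Finset.sum_nbij' (fun k => n - k) (fun k => n - k) ?_ ?_ ?_ ?_ ?_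
    · intro a ha; simp only [Finset.mem_range] at ha; simp only [Finset.mem_Ico]; omega
    · intro a ha; simp only [Finset.mem_Ico] at ha; simp only [Finset.mem_range]; omega
    · intro a ha; simp only [Finset.mem_range] at ha; show n - (n - a) = a; omega
    · intro a ha; simp only [Finset.mem_Ico] at ha; show n - (n - a) = a; omega
    · intro a ha; simp only [Finset.mem_range] at ha
      exact (Nat.choose_symm (by omega)).symm
  have hui := Finset.sum_union_inter (s₁ := range (n/2+1)) (s₂ := Finset.Ico (n - n/2) (n+1))
    (f := fun k => n.choose k)
  have h1 : ∑ k ∈ range (n/2+1) ∪ Finset.Ico (n - n/2) (n+1), n.choose k ≤ 2^n := by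
    rw [← Nat.sum_range_choose n]
    refine Finset.sum_le_sum_of_subset ?_
    intro a ha
    simp only [Finset.mem_union, Finset.mem_range, Finset.mem_Ico] at ha ⊢
    omega
  have h2 : ∑ k ∈ (range (n/2+1) ∩ Finset.Ico (n - n/2) (n+1)), n.choose k
      ≤ n.choose (n/2) := by
    have hsub : range (n/2+1) ∩ Finset.Ico (n - n/2) (n+1) ⊆ {n/2} := by
      intro a ha
      simp only [Finset.mem_inter, Finset.mem_range, Finset.mem_Ico] at ha
      simp only [Finset.mem_singleton]
      omega
    calc ∑ k ∈ (range (n/2+1) ∩ Finset.Ico (n - n/2) (n+1)), n.choose k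
        ≤ ∑ k ∈ ({n/2} : Finset ℕ), n.choose k := Finset.sum_le_sum_of_subset hsub
      _ = n.choose (n/2) := by simp
  omega

theorem stmt_5 :
    ∃ c : ℝ, 0 < c ∧ ∃ N : ℕ, ∀ n ≥ N, ∀ (t : ℕ) (G : MvPolynomial (Fin n) ℝ),
      G.totalDegree ≤ t →
      3 * 2 ^ n ≤ 4 * (Finset.univ.filter (fun x : Fin n → Bool =>
          MvPolynomial.eval (fun i => chi (x i)) G = ∏ i : Fin n, chi (x i))).card →
      c * Real.sqrt n ≤ t := by
  classical
  refine ⟨1/8, by norm_num, 64, fun n hn t G hdeg hcard => ?_⟩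
  set A := Finset.univ.filter (fun x : Fin n → Bool =>
      MvPolynomial.eval (fun i => chi (x i)) G = ∏ i : Fin n, chi (x i)) with hAdef
  have hA : ∀ x ∈ A, MvPolynomial.eval (fun i => chi (x i)) G = ∏ i, chi (x i) := by
    intro x hx; exact (Finset.mem_filter.mp hx).2
  have h1 := card_agree_le n t G hdeg A hA
  set B := n.choose (n/2) with hB
  set S1 := ∑ k ∈ range (n/2 + 1), n.choose k with hS1
  -- split sum
  have hsplit : ∑ k ∈ Finset.range (n/2 + t + 1), n.choose k
      = S1 + ∑ k ∈ Finset.Ico (n/2 + 1) (n/2 + t + 1), n.choose k := by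
    rw [hS1, Finset.range_eq_Ico, Finset.range_eq_Ico]
    exact (Finset.sum_Ico_consecutive (fun k => n.choose k) (m := 0) (n := n/2 + 1) (k := n/2 + t + 1) (by omega) (by omega)).symm
  have hS2 : ∑ k ∈ Finset.Ico (n/2 + 1) (n/2 + t + 1), n.choose k ≤ t * B := by
    calc ∑ k ∈ Finset.Ico (n/2 + 1) (n/2 + t + 1), n.choose k
        ≤ (Finset.Ico (n/2 + 1) (n/2 + t + 1)).card • B :=
          Finset.sum_le_card_nsmul _ _ _ (fun k _ => Nat.choose_le_middle k n)
      _ = t * B := by rw [Nat.card_Ico]; simp [smul_eq_mul]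
  have hhalf := two_mul_sum_half_le n
  rw [← hS1, ← hB] at hhalf
  -- main Nat inequality
  have hmain : 2^n ≤ (4*t+4) * B := by
    have e : (4*t+4)*B = 4*(t*B) + 4*B := by ring
    rw [hsplit] at h1
    nlinarith [hcard, h1, hS2, hhalf]
  -- to reals
  have hBsqrt : (B:ℝ) * Real.sqrt n ≤ 2^n := by
    have h := mid_sq_le n
    have hsq : ((B:ℝ) * Real.sqrt n)^2 ≤ ((2:ℝ)^n)^2 := by
      rw [mul_pow, Real.sq_sqrt (by positivity : (0:ℝ) ≤ (n:ℝ))]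
      calc (B:ℝ)^2 * n ≤ 4^n := by exact_mod_cast h
        _ = ((2:ℝ)^n)^2 := by
            rw [← pow_mul, show (4:ℝ) = 2^2 by norm_num, ← pow_mul]
            ring_nf
    have h0 : (0:ℝ) ≤ (B:ℝ) * Real.sqrt n := by positivity
    have := Real.sqrt_le_sqrt hsq
    rwa [Real.sqrt_sq h0, Real.sqrt_sq (by positivity)] at this
  have hmainR : (2:ℝ)^n ≤ (4*t+4) * B := by exact_mod_cast hmain
  have hsqn : Real.sqrt n ≤ 4*t+4 := by
    have hpos : (0:ℝ) < 2^n := by positivity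
    have hKpos : (0:ℝ) ≤ (4*(t:ℝ)+4) := by positivity
    have step1 : (2:ℝ)^n * Real.sqrt n ≤ ((4*t+4) * B) * Real.sqrt n :=
      mul_le_mul_of_nonneg_right hmainR (Real.sqrt_nonneg _)
    have step2 : ((4*(t:ℝ)+4) * B) * Real.sqrt n ≤ (4*t+4) * 2^n := by
      rw [mul_assoc]
      exact mul_le_mul_of_nonneg_left hBsqrt hKpos
    have final : (2:ℝ)^n * Real.sqrt n ≤ 2^n * (4*t+4) := by
      calc (2:ℝ)^n * Real.sqrt n ≤ ((4*(t:ℝ)+4) * B) * Real.sqrt n := step1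
        _ ≤ (4*t+4) * 2^n := step2
        _ = 2^n * (4*t+4) := by ring
    exact (mul_le_mul_iff_right₀ hpos).mp final
  have h8 : (8:ℝ) ≤ Real.sqrt n := by
    rw [Real.le_sqrt (by norm_num) (by positivity)]
    have : (64:ℝ) ≤ n := by exact_mod_cast hn
    nlinarith
  linarith
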